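/- Let X: Ω → ℤ₊ be a random variable with binomial moments S_j := E[C(X,j)]. Fix k ∈ ℕ. Then the identity Pr(X ≥ k) = Σ_{j=0}^∞ (-1)^j C(j+k-1, k-1) S_{j+k} (with convergent series) holds if and only if all S_l are finite and l^{k-1} S_l → 0 as l → ∞. -/

import Mathlib

open MeasureTheory Filter ENNReal

noncomputable def binomMoment {Ω : Type*} [MeasurableSpace Ω] (μ : Measure Ω) (X : Ω → ℕ)
    (j : ℕ) : ℝ≥0∞ :=
  ∫⁻ ω, ((X ω).choose j : ℝ≥0∞) ∂μ

namespace Stmt14Aux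

/-- Remainder in the Bonferroni-type partial sums of binomial moments. -/
def cc (k N d : ℕ) : ℕ :=
  ∑ i ∈ Finset.range k, Nat.choose (N + i - 1) i * Nat.choose (d + i) (N + i)

lemma cc_rec (s N d : ℕ) :
    cc (s+1) (N+1) d + cc (s+1) N d
      = Nat.choose (N + s) s * Nat.choose (s + 1 + d) (N + s + 1) := by
  induction s with
  | zero =>
      have hL : ∀ M, cc 1 M d = Nat.choose d M := by
        intro M; simp [cc]
      rw [hL, hL, show N + 0 = N from rfl, Nat.choose_zero_right, one_mul,
        show 0 + 1 + d = d + 1 by omega, show N + 0 + 1 = N + 1 from rfl,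
        Nat.choose_succ_succ]
      simp only [Nat.succ_eq_add_one]
      omega
  | succ s ih =>
      have e1 : cc (s+1+1) (N+1) d
          = cc (s+1) (N+1) d
            + Nat.choose (N+1+(s+1)-1) (s+1) * Nat.choose (d+(s+1)) (N+1+(s+1)) := by
        simp only [cc, Finset.sum_range_succ]
      have e2 : cc (s+1+1) N d
          = cc (s+1) N d
            + Nat.choose (N+(s+1)-1) (s+1) * Nat.choose (d+(s+1)) (N+(s+1)) := by
        simp only [cc, Finset.sum_range_succ]
      rw [e1, e2]
      have h1 : Nat.choose (N+s+1) (s+1) = Nat.choose (N+s) s + Nat.choose (N+s) (s+1) :=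
        Nat.choose_succ_succ _ _
      have h2 : Nat.choose (s+1+d+1) (N+s+2)
          = Nat.choose (s+1+d) (N+s+1) + Nat.choose (s+1+d) (N+s+2) :=
        Nat.choose_succ_succ _ _
      simp only [show N+1+(s+1)-1 = N+s+1 from by omega, show N+(s+1)-1 = N+s from by omega,
        show d+(s+1) = s+1+d from by omega, show N+1+(s+1) = N+s+2 from by omega,
        show N+(s+1) = N+s+1 from by omega, show s+1+1+d = s+1+d+1 from by omega,
        show N+(s+1)+1 = N+s+2 from by omega, show N+s+2-1 = N+s+1 from by omega,
        show N+s+1-1 = N+s from by omega, show N+s+1+1 = N+s+2 from by omega]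
      rw [h1, h2]
      zify at ih ⊢
      linear_combination ih

lemma cc_zero (s d : ℕ) : cc (s+1) 0 d = 1 := by
  rw [cc, Finset.sum_eq_single 0]
  · simp
  · intro b _ hb
    rw [Nat.choose_eq_zero_of_lt (by omega)]
    ring
  · intro h
    exact absurd (Finset.mem_range.2 (by omega)) h

lemma cc_bound (s N d : ℕ) :
    cc (s+1) N d ≤ Nat.choose (N + s) s * Nat.choose (s + 1 + d) (N + s + 1) := by
  have h := cc_rec s N d
  omega

lemma ident (s d : ℕ) : ∀ N,
    ∑ j ∈ Finset.range N,
        (-1 : ℤ)^j * Nat.choose (j+s) s * Nat.choose (s+1+d) (j+s+1)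
      = 1 - (-1)^N * cc (s+1) N d := by
  intro N
  induction N with
  | zero => simp [cc_zero]
  | succ N ih =>
      rw [Finset.sum_range_succ, ih]
      have h : (cc (s+1) (N+1) d : ℤ) + cc (s+1) N d
          = (Nat.choose (N + s) s : ℤ) * Nat.choose (s + 1 + d) (N + s + 1) := by
        exact_mod_cast cc_rec s N d
      rw [pow_succ]
      linear_combination (-(-1 : ℤ)^N) * h

lemma pointwise (s n N : ℕ) :
    |(if s+1 ≤ n then (1:ℝ) else 0)
        - ∑ j ∈ Finset.range N, (-1:ℝ)^j * (Nat.choose (j+s) s) * (Nat.choose n (j+s+1))|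
      ≤ (Nat.choose (N+s) s : ℝ) * Nat.choose n (N+s+1) := by
  by_cases h : s+1 ≤ n
  · obtain ⟨d, rfl⟩ : ∃ d, n = s+1+d := ⟨n-(s+1), by omega⟩
    have hid := ident s d N
    have hcast : (∑ j ∈ Finset.range N,
        (-1:ℝ)^j * (Nat.choose (j+s) s) * (Nat.choose (s+1+d) (j+s+1)))
        = 1 - (-1)^N * cc (s+1) N d := by exact_mod_cast hid
    rw [if_pos h, hcast, show (1:ℝ) - (1 - (-1)^N * cc (s+1) N d)
      = (-1)^N * cc (s+1) N d by ring, abs_mul, abs_pow, abs_neg, abs_one, one_pow, one_mul,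
      abs_of_nonneg (by positivity)]
    exact_mod_cast cc_bound s N d
  · have hz : ∀ j, (Nat.choose n (j+s+1) : ℝ) = 0 := fun j => by
      rw [Nat.choose_eq_zero_of_lt (by omega)]; simp
    rw [if_neg h]
    simp [hz]

lemma pow_le_aux (s l : ℕ) (hl : 2*(s+1) ≤ l) :
    l^s ≤ 2^s * (Nat.factorial s * Nat.choose (l-1) s) := by
  have h1 : (l-1+1-s)^s ≤ (l-1).descFactorial s := Nat.pow_sub_le_descFactorial _ _
  rw [Nat.descFactorial_eq_factorial_mul_choose] at h1
  have h2 : l ≤ 2 * (l-1+1-s) := by omega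
  calc l^s ≤ (2*(l-1+1-s))^s := Nat.pow_le_pow_left h2 s
    _ = 2^s * (l-1+1-s)^s := mul_pow 2 _ s
    _ ≤ 2^s * (Nat.factorial s * Nat.choose (l-1) s) := Nat.mul_le_mul_left _ h1

end Stmt14Aux

/-- `Pr(X ≥ k) = Σ_j (-1)^j C(j+k-1,k-1) S_{j+k}` (with convergent series) holds
iff all `S_l` are finite and `l^(k-1) S_l → 0`. -/
theorem stmt14 {Ω : Type*} [MeasurableSpace Ω] (μ : Measure Ω) [IsProbabilityMeasure μ]
    (X : Ω → ℕ) (hX : Measurable X) (k : ℕ) (hk : 1 ≤ k) :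
    ((∀ l, 1 ≤ l → binomMoment μ X l ≠ ∞) ∧
      Tendsto (fun n => ∑ j ∈ Finset.range n,
          (-1 : ℝ) ^ j * (Nat.choose (j + k - 1) (k - 1)) * (binomMoment μ X (j + k)).toReal)
        atTop (nhds (μ {ω | k ≤ X ω}).toReal)) ↔
    ((∀ l, 1 ≤ l → binomMoment μ X l ≠ ∞) ∧
      Tendsto (fun l : ℕ => (l : ℝ) ^ (k - 1) * (binomMoment μ X l).toReal)
        atTop (nhds 0)) := by
  classical
  obtain ⟨s, rfl⟩ : ∃ s, k = s + 1 := ⟨k-1, by omega⟩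
  simp only [show ∀ j : ℕ, j + (s+1) = j + s + 1 from fun j => by omega, Nat.add_sub_cancel]
  set S : ℕ → ℝ≥0∞ := fun l => binomMoment μ X l with hSdef
  set T : ℕ → ℝ := fun N => ∑ j ∈ Finset.range N,
      (-1 : ℝ) ^ j * (Nat.choose (j + s) s) * (S (j + s + 1)).toReal with hTdef
  -- measurability
  have hmeas : ∀ l, Measurable (fun ω => ((X ω).choose l : ℝ≥0∞)) :=
    fun l =>
      Measurable.comp (f := X) (g := fun n : ℕ => ((n.choose l : ℝ≥0∞))) measurable_from_nat hX
  have hs : MeasurableSet {ω | s+1 ≤ X ω} := hX (by trivial)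
  -- key estimate under finiteness
  have key : (∀ l, 1 ≤ l → binomMoment μ X l ≠ ∞) → ∀ N,
      |(μ {ω | s+1 ≤ X ω}).toReal - T N|
        ≤ (Nat.choose (N+s) s : ℝ) * (S (N+s+1)).toReal := by
    intro h1 N
    have hInt : ∀ l, 1 ≤ l → Integrable (fun ω => ((X ω).choose l : ℝ)) μ := by
      intro l hl
      have := integrable_toReal_of_lintegral_ne_top (hmeas l).aemeasurable (h1 l hl)
      simpa [ENNReal.toReal_natCast] using this
    have hS : ∀ l, 1 ≤ l → (S l).toReal = ∫ ω, ((X ω).choose l : ℝ) ∂μ := by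
      intro l hl
      have h := integral_toReal (μ := μ) (hmeas l).aemeasurable
        (Filter.Eventually.of_forall fun ω => ENNReal.natCast_lt_top _)
      simp only [ENNReal.toReal_natCast] at h
      exact h.symm
    have hgInt : Integrable (fun ω => if s+1 ≤ X ω then (1:ℝ) else 0) μ := by
      have he : (fun ω => if s+1 ≤ X ω then (1:ℝ) else 0)
          = Set.indicator {ω | s+1 ≤ X ω} (fun _ => 1) := by
        ext ω; simp [Set.indicator_apply]
      rw [he]
      exact (integrable_const 1).indicator hs
    have hP : (μ {ω | s+1 ≤ X ω}).toReal = ∫ ω, (if s+1 ≤ X ω then (1:ℝ) else 0) ∂μ := by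
      rw [← measureReal_def, ← MeasureTheory.integral_indicator_one hs]
      refine integral_congr_ae (Filter.Eventually.of_forall fun ω => ?_)
      simp [Set.indicator_apply]
    have hTj : ∀ j ∈ Finset.range N,
        Integrable (fun ω => (-1:ℝ)^j * (Nat.choose (j+s) s) * ((X ω).choose (j+s+1) : ℝ)) μ :=
      fun j _ => (hInt (j+s+1) (by omega)).const_mul _
    have hF : Integrable (fun ω => ∑ j ∈ Finset.range N,
        (-1:ℝ)^j * (Nat.choose (j+s) s) * ((X ω).choose (j+s+1) : ℝ)) μ :=
      integrable_finset_sum _ hTj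
    have hTN : T N = ∫ ω, (∑ j ∈ Finset.range N,
        (-1:ℝ)^j * (Nat.choose (j+s) s) * ((X ω).choose (j+s+1) : ℝ)) ∂μ := by
      rw [integral_finset_sum _ hTj]
      refine Finset.sum_congr rfl fun j _ => ?_
      rw [integral_const_mul _ _, hS (j+s+1) (by omega)]
    rw [hP, hTN, ← integral_sub hgInt hF]
    calc |∫ ω, ((if s+1 ≤ X ω then (1:ℝ) else 0) - ∑ j ∈ Finset.range N,
            (-1:ℝ)^j * (Nat.choose (j+s) s) * ((X ω).choose (j+s+1) : ℝ)) ∂μ|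
        ≤ ∫ ω, |(if s+1 ≤ X ω then (1:ℝ) else 0) - ∑ j ∈ Finset.range N,
            (-1:ℝ)^j * (Nat.choose (j+s) s) * ((X ω).choose (j+s+1) : ℝ)| ∂μ := by
          simpa [Real.norm_eq_abs] using
            norm_integral_le_integral_norm (μ := μ)
              (f := fun ω => (if s+1 ≤ X ω then (1:ℝ) else 0) - ∑ j ∈ Finset.range N,
                (-1:ℝ)^j * (Nat.choose (j+s) s) * ((X ω).choose (j+s+1) : ℝ))
      _ ≤ ∫ ω, (Nat.choose (N+s) s : ℝ) * ((X ω).choose (N+s+1) : ℝ) ∂μ := by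
          refine integral_mono (hgInt.sub hF).abs ((hInt (N+s+1) (by omega)).const_mul _)
            fun ω => ?_
          exact Stmt14Aux.pointwise s (X ω) N
      _ = (Nat.choose (N+s) s : ℝ) * (S (N+s+1)).toReal := by
          rw [integral_const_mul _ _, hS (N+s+1) (by omega)]
  constructor
  · rintro ⟨h1, h2⟩
    refine ⟨h1, ?_⟩
    -- terms of a convergent series tend to zero
    have h3 : Tendsto (fun N => T (N+1) - T N) atTop (nhds 0) := by
      have := ((h2.comp (tendsto_add_atTop_nat 1)).sub h2)
      simpa using this
    have hterm0 : ∀ N, T (N+1) - T N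
        = (-1:ℝ)^N * (Nat.choose (N+s) s) * (S (N+s+1)).toReal := by
      intro N
      simp only [hTdef, Finset.sum_range_succ]
      ring
    have hterm : Tendsto (fun N => (Nat.choose (N+s) s : ℝ) * (S (N+s+1)).toReal)
        atTop (nhds 0) := by
      have habs := h3.abs
      rw [abs_zero] at habs
      refine habs.congr fun N => ?_
      rw [hterm0 N, abs_mul, abs_mul, abs_pow, abs_neg, abs_one, one_pow, one_mul,
        abs_of_nonneg (by positivity), abs_of_nonneg ENNReal.toReal_nonneg]
    have hshift : Tendsto (fun l => ((Nat.choose (l-1) s : ℝ)) * (S l).toReal)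
        atTop (nhds 0) := by
      rw [← tendsto_add_atTop_iff_nat (s+1)]
      refine hterm.congr fun N => ?_
      congr 2 <;> omega
    have hbig : Tendsto (fun l => (2:ℝ)^s * Nat.factorial s
        * ((Nat.choose (l-1) s : ℝ) * (S l).toReal)) atTop (nhds 0) := by
      simpa using hshift.const_mul ((2:ℝ)^s * Nat.factorial s)
    refine squeeze_zero' (Filter.Eventually.of_forall fun l => by positivity) ?_ hbig
    filter_upwards [Filter.eventually_ge_atTop (2*(s+1))] with l hl
    have hb := Stmt14Aux.pow_le_aux s l hl
    have hb' : ((l:ℝ))^s ≤ (2:ℝ)^s * (Nat.factorial s * Nat.choose (l-1) s) := by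
      exact_mod_cast hb
    calc (l:ℝ)^s * (S l).toReal
        ≤ ((2:ℝ)^s * (Nat.factorial s * Nat.choose (l-1) s)) * (S l).toReal :=
          mul_le_mul_of_nonneg_right hb' ENNReal.toReal_nonneg
      _ = (2:ℝ)^s * Nat.factorial s * ((Nat.choose (l-1) s : ℝ) * (S l).toReal) := by ring
  · rintro ⟨h1, h2⟩
    refine ⟨h1, ?_⟩
    have hE := key h1
    have hb : Tendsto (fun N => (Nat.choose (N+s) s : ℝ) * (S (N+s+1)).toReal)
        atTop (nhds 0) := by
      have hcomp : Tendsto (fun N => ((N+s+1 : ℕ) : ℝ)^s * (S (N+s+1)).toReal)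
          atTop (nhds 0) := by
        have := h2.comp (tendsto_add_atTop_nat (s+1))
        refine this.congr fun N => ?_
        simp only [Function.comp_apply]
        rw [show N + (s+1) = N + s + 1 from by omega]
      refine squeeze_zero (fun N => by positivity) (fun N => ?_) hcomp
      have hc : (Nat.choose (N+s) s : ℝ) ≤ ((N+s+1 : ℕ) : ℝ)^s := by
        have h4 : Nat.choose (N+s) s ≤ (N+s+1)^s :=
          le_trans (Nat.choose_le_pow _ _) (Nat.pow_le_pow_left (by omega) s)
        exact_mod_cast h4
      exact mul_le_mul_of_nonneg_right hc ENNReal.toReal_nonneg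
    rw [← tendsto_sub_nhds_zero_iff]
    refine squeeze_zero_norm (fun N => ?_) hb
    rw [Real.norm_eq_abs, abs_sub_comm]
    exact hE N
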